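/- Let P ⊆ ℝ³ be a compact convex set with 0 in its interior, let Π be a plane supporting P such that the face F = Π ∩ P has affine dimension 2, and let q be a point of the relative interior of F. If q is an equilibrium point of P, i.e. ⟪x, q⟫ ≤ ‖q‖² for all x ∈ P, then q is the orthogonal projection of 0 onto Π. In particular, the relative interior of each face of a convex polyhedron contains at most one equilibrium point. -/

import Mathlib

open scoped RealInnerProductSpace

private lemma aux_finrank_orth (nv : EuclideanSpace ℝ (Fin 3)) (hnv : nv ≠ 0) :
    Module.finrank ℝ ((ℝ ∙ nv)ᗮ : Submodule ℝ (EuclideanSpace ℝ (Fin 3))) = 2 := by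
  have h1 : Module.finrank ℝ (ℝ ∙ nv) = 1 := finrank_span_singleton hnv
  have h2 := Submodule.finrank_add_finrank_orthogonal (𝕜 := ℝ) (K := ℝ ∙ nv)
  have h3 : Module.finrank ℝ (EuclideanSpace ℝ (Fin 3)) = 3 := finrank_euclideanSpace_fin
  rw [h1, h3] at h2
  omega

/-- if `B` is a plane supporting a compact convex body `P ∋ 0` such that the
face `F = B ∩ P` has affine dimension `2`, and `q`, a point of the relative interior of
`F`, is an equilibrium point of `P`, then `q` is the orthogonal projection of `0` onto
`B`. -/
theorem equilibrium_in_face_is_projection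
    (P : Set (EuclideanSpace ℝ (Fin 3))) (hPc : IsCompact P) (hPconv : Convex ℝ P)
    (h0 : (0 : EuclideanSpace ℝ (Fin 3)) ∈ interior P)
    (nv : EuclideanSpace ℝ (Fin 3)) (c : ℝ) (hnv : nv ≠ 0)
    (B : Set (EuclideanSpace ℝ (Fin 3))) (hB : B = {x | ⟪nv, x⟫ = c})
    -- `B` supports `P`
    (hsupp : ∀ x ∈ P, ⟪nv, x⟫ ≤ c)
    (F : Set (EuclideanSpace ℝ (Fin 3))) (hF : F = B ∩ P)
    -- `F` has affine dimension `2`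
    (hdim : Module.finrank ℝ (vectorSpan ℝ F) = 2)
    (q : EuclideanSpace ℝ (Fin 3)) (hq : q ∈ intrinsicInterior ℝ F)
    -- `q` is an equilibrium point of `P`
    (heq : ∀ x ∈ P, ⟪x, q⟫ ≤ ‖q‖ ^ 2) :
    q ∈ B ∧ ∀ x ∈ B, ⟪(0 : EuclideanSpace ℝ (Fin 3)) - q, x - q⟫ = 0 := by
  have hqF : q ∈ F := intrinsicInterior_subset hq
  have hqB : q ∈ B := (hF ▸ hqF).1
  set W : Submodule ℝ (EuclideanSpace ℝ (Fin 3)) := (ℝ ∙ nv)ᗮ with hW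
  -- the vector span of F is contained in W
  have hle : vectorSpan ℝ F ≤ W := by
    rw [vectorSpan_def]
    refine Submodule.span_le.2 ?_
    rintro v ⟨x, hx, y, hy, rfl⟩
    rw [SetLike.mem_coe, Submodule.mem_orthogonal_singleton_iff_inner_right]
    have hx' : ⟪nv, x⟫ = c := by have := (hF ▸ hx).1; rwa [hB] at this
    have hy' : ⟪nv, y⟫ = c := by have := (hF ▸ hy).1; rwa [hB] at this
    simp only [vsub_eq_sub, inner_sub_right, hx', hy', sub_self]
  -- finrank of W is 2
  have hWrank : Module.finrank ℝ W = 2 := aux_finrank_orth nv hnv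
  have hVW : vectorSpan ℝ F = W :=
    Submodule.eq_of_le_of_finrank_eq hle (by rw [hdim, hWrank])
  -- q is orthogonal to every vector of W
  have hkey : ∀ v ∈ W, ⟪v, q⟫ = 0 := by
    intro v hv
    rcases eq_or_ne v 0 with rfl | hv0
    · simp
    -- unpack the intrinsic interior membership
    obtain ⟨z, hz, hzq⟩ := hq
    rw [mem_interior_iff_mem_nhds, Metric.mem_nhds_iff] at hz
    obtain ⟨ε, hε, hball⟩ := hz
    have hmem : ∀ t : ℝ, |t| * ‖v‖ < ε → q + t • v ∈ P := by
      intro t ht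
      have hdir : (t • v) ∈ (affineSpan ℝ F).direction := by
        rw [direction_affineSpan, hVW]
        exact Submodule.smul_mem _ t hv
      have hspan : q + t • v ∈ affineSpan ℝ F := by
        have := AffineSubspace.vadd_mem_of_mem_direction hdir
          (mem_affineSpan ℝ hqF)
        simpa [vadd_eq_add, add_comm] using this
      have : (⟨q + t • v, hspan⟩ : affineSpan ℝ F) ∈ Metric.ball z ε := by
        rw [Metric.mem_ball, Subtype.dist_eq, hzq]
        simp only [dist_eq_norm, add_sub_cancel_left]
        rwa [norm_smul, Real.norm_eq_abs]
      have := hball this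
      exact (hF ▸ (show q + t • v ∈ F from this)).2
    have hineq : ∀ t : ℝ, |t| * ‖v‖ < ε → t * ⟪v, q⟫ ≤ 0 := by
      intro t ht
      have := heq _ (hmem t ht)
      rw [inner_add_left, real_inner_self_eq_norm_sq, real_inner_smul_left] at this
      linarith
    set t := ε / (2 * ‖v‖) with htdef
    have hvn : 0 < ‖v‖ := norm_pos_iff.2 hv0
    have htpos : 0 < t := div_pos hε (by positivity)
    have htlt : |t| * ‖v‖ < ε := by
      have heq2 : |t| * ‖v‖ = ε / 2 := by
        rw [abs_of_pos htpos, htdef]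
        field_simp
      rw [heq2]; linarith
    have h1 := hineq t htlt
    have h2 := hineq (-t) (by simpa using htlt)
    have h2' : -(t * ⟪v, q⟫) ≤ 0 := by rw [← neg_mul]; exact h2
    nlinarith
  refine ⟨hqB, fun x hx => ?_⟩
  have hxq : x - q ∈ W := by
    refine Submodule.mem_orthogonal_singleton_iff_inner_right.2 ?_
    have hx' : ⟪nv, x⟫ = c := by rwa [hB] at hx
    have hq' : ⟪nv, q⟫ = c := by rwa [hB] at hqB
    simp [inner_sub_right, hx', hq']
  have := hkey _ hxq
  rw [zero_sub, inner_neg_left, real_inner_comm, this, neg_zero]
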